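/- Let ω > 0, let a < b be real numbers, and let φ be a C² function on [a, b] with φ(a) = φ(b) = 0 such that |−φ''(x) + ω²·φ(x)| ≤ M for all x ∈ [a, b], where M ≥ 0. Then sup_{x ∈ [a, b]} |φ(x)| ≤ M/ω². -/
import Mathlib

/-- At an interior local max of a `C²` function, the second derivative cannot be positive. -/
lemma second_deriv_local_max_aux (a b c : ℝ) (ψ : ℝ → ℝ) (hc : c ∈ Set.Ioo a b)
    (hψ : ContDiffOn ℝ 2 ψ (Set.Ioo a b)) (hmax : IsLocalMax ψ c)
    (hpos : 0 < deriv (deriv ψ) c) : False := by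
  have hopen : IsOpen (Set.Ioo a b) := isOpen_Ioo
  -- deriv ψ is C¹ on Ioo a b
  have hd1 : ContDiffOn ℝ 1 (deriv ψ) (Set.Ioo a b) :=
    ContDiffOn.deriv_of_isOpen (m := 1) hψ hopen (by norm_num)
  have hcont2 : ContinuousOn (deriv (deriv ψ)) (Set.Ioo a b) :=
    hd1.continuousOn_deriv_of_isOpen hopen le_rfl
  have hcont2at : ContinuousAt (deriv (deriv ψ)) c :=
    hcont2.continuousAt (hopen.mem_nhds hc)
  -- find ε-ball where deriv (deriv ψ) > 0, ψ ≤ ψ c, and inside Ioo a b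
  have h1 : ∀ᶠ x in nhds c, 0 < deriv (deriv ψ) x :=
    continuousAt_const.eventually_lt hcont2at hpos
  have h3 : ∀ᶠ x in nhds c, x ∈ Set.Ioo a b := hopen.eventually_mem hc
  obtain ⟨ε, hε, hball⟩ := Metric.eventually_nhds_iff_ball.1 ((h1.and hmax).and h3)
  set d := c + ε / 2 with hd
  have hcd : c < d := by simp [hd]; positivity
  have hsub : Set.Icc c d ⊆ Metric.ball c ε := by
    intro x hx
    simp only [Metric.mem_ball, Real.dist_eq, abs_lt]
    have h2 : x ≤ c + ε / 2 := hx.2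
    constructor <;> linarith [hx.1]
  have hsub' : Set.Icc c d ⊆ Set.Ioo a b := fun x hx => (hball _ (hsub hx)).2
  -- deriv ψ is strictly monotone on [c, d]
  have hc1 : ContinuousOn (deriv ψ) (Set.Icc c d) :=
    (hd1.continuousOn).mono hsub'
  have hmono : StrictMonoOn (deriv ψ) (Set.Icc c d) := by
    apply strictMonoOn_of_deriv_pos (convex_Icc c d) hc1
    intro x hx
    rw [interior_Icc] at hx
    exact (hball _ (hsub ⟨le_of_lt hx.1, le_of_lt hx.2⟩)).1.1
  have hd0 : deriv ψ c = 0 := hmax.deriv_eq_zero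
  have hderivpos : ∀ x ∈ Set.Ioo c d, 0 < deriv ψ x := by
    intro x hx
    have := hmono (Set.left_mem_Icc.2 hcd.le) ⟨hx.1.le, hx.2.le⟩ hx.1
    rwa [hd0] at this
  -- hence ψ is strictly monotone on [c, d]
  have hcψ : ContinuousOn ψ (Set.Icc c d) :=
    (hψ.continuousOn).mono hsub'
  have hmonoψ : StrictMonoOn ψ (Set.Icc c d) := by
    apply strictMonoOn_of_deriv_pos (convex_Icc c d) hcψ
    intro x hx
    rw [interior_Icc] at hx
    exact hderivpos x hx
  have : ψ c < ψ d := hmonoψ (Set.left_mem_Icc.2 hcd.le) (Set.right_mem_Icc.2 hcd.le) hcd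
  have hle : ψ d ≤ ψ c := (hball d (hsub (Set.right_mem_Icc.2 hcd.le))).1.2
  linarith

/-- **Maximum-principle bound (cf. (3.9)).** If `φ` is `C²` on `[a, b]`, vanishes at the
endpoints, and `|−φ'' + ω² φ| ≤ M` on `[a, b]` with `ω > 0`, then `|φ| ≤ M / ω²`
on `[a, b]`. -/
theorem max_principle_bound
    (ω a b M : ℝ) (hω : 0 < ω) (hab : a < b) (hM : 0 ≤ M)
    (φ : ℝ → ℝ) (hφ : ContDiffOn ℝ 2 φ (Set.Icc a b))
    (hφa : φ a = 0) (hφb : φ b = 0)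
    (hineq : ∀ x ∈ Set.Icc a b,
      |(-derivWithin (derivWithin φ (Set.Icc a b)) (Set.Icc a b) x + ω ^ 2 * φ x)| ≤ M) :
    ∀ x ∈ Set.Icc a b, |φ x| ≤ M / ω ^ 2 := by
  have hω2 : (0:ℝ) < ω ^ 2 := by positivity
  have hMω : 0 ≤ M / ω ^ 2 := div_nonneg hM hω2.le
  -- maximum of |φ| attained at some c
  obtain ⟨c, hcmem, hcmax⟩ := isCompact_Icc.exists_isMaxOn (Set.nonempty_Icc.2 hab.le)
    ((hφ.continuousOn).abs)
  intro x hx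
  suffices h : |φ c| ≤ M / ω ^ 2 by exact le_trans (hcmax hx) h
  by_contra hlt
  push_neg at hlt
  have hφc : 0 < |φ c| := lt_of_le_of_lt hMω hlt
  -- c is an interior point
  have hca : c ≠ a := fun h => by rw [h, hφa, abs_zero] at hφc; exact lt_irrefl 0 hφc
  have hcb : c ≠ b := fun h => by rw [h, hφb, abs_zero] at hφc; exact lt_irrefl 0 hφc
  have hcIoo : c ∈ Set.Ioo a b := ⟨lt_of_le_of_ne hcmem.1 (Ne.symm hca),
    lt_of_le_of_ne hcmem.2 hcb⟩
  -- relate derivWithin to deriv at interior points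
  have hnhds : Set.Icc a b ∈ nhds c := Icc_mem_nhds hcIoo.1 hcIoo.2
  have heq1 : ∀ y ∈ Set.Ioo a b, derivWithin φ (Set.Icc a b) y = deriv φ y := by
    intro y hy
    exact derivWithin_of_mem_nhds (Icc_mem_nhds hy.1 hy.2)
  have heqev : derivWithin φ (Set.Icc a b) =ᶠ[nhds c] deriv φ :=
    Filter.eventuallyEq_of_mem (isOpen_Ioo.mem_nhds hcIoo) heq1
  have hD2 : derivWithin (derivWithin φ (Set.Icc a b)) (Set.Icc a b) c
      = deriv (deriv φ) c := by
    rw [derivWithin_of_mem_nhds hnhds]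
    exact heqev.deriv_eq
  have hineqc := hineq c hcmem
  rw [hD2] at hineqc
  have habs := abs_le.1 hineqc
  have hφIoo : ContDiffOn ℝ 2 φ (Set.Ioo a b) := hφ.mono Set.Ioo_subset_Icc_self
  rcases lt_or_ge 0 (φ c) with hpos | hneg
  · -- φ c > 0: local max of φ at c, deriv deriv φ c > 0
    have habs' : |φ c| = φ c := abs_of_pos hpos
    have hmax : IsLocalMax φ c := by
      filter_upwards [hnhds] with y hy
      calc φ y ≤ |φ y| := le_abs_self _
        _ ≤ |φ c| := hcmax hy
        _ = φ c := habs'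
    have hpos2 : 0 < deriv (deriv φ) c := by
      have : M < ω ^ 2 * φ c := by
        rw [habs'] at hlt
        calc M = (M / ω ^ 2) * ω ^ 2 := by field_simp
          _ < φ c * ω ^ 2 := by exact mul_lt_mul_of_pos_right hlt hω2
          _ = ω ^ 2 * φ c := by ring
      linarith [habs.2]
    exact second_deriv_local_max_aux a b c φ hcIoo hφIoo hmax hpos2
  · -- φ c < 0: apply to -φ
    have hneg' : φ c < 0 := by
      rcases lt_or_eq_of_le hneg with h | h
      · exact h
      · rw [h, abs_zero] at hφc; exact absurd hφc (lt_irrefl 0)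
    have habs' : |φ c| = -φ c := abs_of_neg hneg'
    have hmax : IsLocalMax (fun y => -φ y) c := by
      filter_upwards [hnhds] with y hy
      calc -φ y ≤ |φ y| := neg_le_abs _
        _ ≤ |φ c| := hcmax hy
        _ = -φ c := habs'
    have hderneg : deriv (fun y => -φ y) = fun y => -deriv φ y := by
      funext y; exact deriv.neg
    have hpos2 : 0 < deriv (deriv (fun y => -φ y)) c := by
      rw [hderneg]
      have : deriv (fun y => -deriv φ y) c = -deriv (deriv φ) c := deriv.neg
      rw [this]
      have hMlt : ω ^ 2 * φ c + M < 0 := by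
        rw [habs'] at hlt
        have : M < -φ c * ω ^ 2 := by
          calc M = (M / ω ^ 2) * ω ^ 2 := by field_simp
            _ < -φ c * ω ^ 2 := mul_lt_mul_of_pos_right hlt hω2
        nlinarith
      linarith [habs.1]
    exact second_deriv_local_max_aux a b c (fun y => -φ y) hcIoo hφIoo.neg hmax hpos2
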